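/- Let x ∈ ℝⁿ with positive entries, d ∈ ℝⁿ, τ ∈ (0,1), and suppose α ∈ (0,1] satisfies x + α d ≥ (1−τ)x componentwise (the fraction-to-the-boundary condition). Then −(∑_{i=1}^n log(x_i + α d_i) − ∑_{i=1}^n log(x_i) − α ∑_{i=1}^n d_i/x_i) ≤ α² (1/(1−τ)) ‖X⁻¹ d‖², where X = diag(x). -/

import Mathlib

lemma aux_log_quad (t c : ℝ) (hc : 0 < c) (h : c ≤ 1 + t) :
    t - Real.log (1 + t) ≤ t ^ 2 / c := by
  have h1 : 0 < 1 + t := lt_of_lt_of_le hc h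
  have hlog : 1 - (1 + t)⁻¹ ≤ Real.log (1 + t) := by
    have := Real.log_le_sub_one_of_pos (inv_pos.mpr h1)
    rw [Real.log_inv] at this
    linarith
  have key : t - Real.log (1 + t) ≤ t ^ 2 / (1 + t) := by
    have : t - (1 - (1 + t)⁻¹) = t ^ 2 / (1 + t) := by
      field_simp; ring
    linarith [hlog, this ▸ sub_le_sub_left hlog t]
  calc t - Real.log (1 + t) ≤ t ^ 2 / (1 + t) := key
    _ ≤ t ^ 2 / c := div_le_div_of_nonneg_left (sq_nonneg t) hc h

/-- Log-barrier curvature bound (Lemma 3.1): if `x > 0`, `τ ∈ (0,1)`, `α ∈ (0,1]` and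
`x + αd ≥ (1-τ)x` componentwise, then
`-(∑ log(xᵢ+αdᵢ) - ∑ log xᵢ - α ∑ dᵢ/xᵢ) ≤ α² (1/(1-τ)) ‖X⁻¹d‖²`. -/
theorem stmt_2 (n : ℕ) (x d : Fin n → ℝ) (τ α : ℝ)
    (hx : ∀ i, 0 < x i) (hτ0 : 0 < τ) (hτ1 : τ < 1)
    (hα0 : 0 < α) (hα1 : α ≤ 1)
    (hftb : ∀ i, (1 - τ) * x i ≤ x i + α * d i) :
    -((∑ i, Real.log (x i + α * d i)) - (∑ i, Real.log (x i)) - α * ∑ i, d i / x i) ≤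
      α ^ 2 * (1 / (1 - τ)) * ∑ i, (d i / x i) ^ 2 := by
  have hτ : 0 < 1 - τ := by linarith
  have hmain : ∀ i, α * (d i / x i) - (Real.log (x i + α * d i) - Real.log (x i)) ≤
      α ^ 2 * (1 / (1 - τ)) * (d i / x i) ^ 2 := by
    intro i
    set t := α * (d i / x i) with ht
    have hxi := hx i
    have hxne : x i ≠ 0 := hxi.ne'
    have hsplit : x i + α * d i = x i * (1 + t) := by
      rw [ht]; field_simp
    have hct : 1 - τ ≤ 1 + t := by
      have := hftb i
      rw [hsplit] at this
      nlinarith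
    have h1 : 0 < 1 + t := lt_of_lt_of_le hτ hct
    have hlogs : Real.log (x i + α * d i) - Real.log (x i) = Real.log (1 + t) := by
      rw [hsplit, Real.log_mul hxne h1.ne']; ring
    rw [hlogs]
    have := aux_log_quad t (1 - τ) hτ hct
    have ht2 : t ^ 2 = α ^ 2 * (d i / x i) ^ 2 := by rw [ht]; ring
    calc t - Real.log (1 + t) ≤ t ^ 2 / (1 - τ) := this
      _ = α ^ 2 * (1 / (1 - τ)) * (d i / x i) ^ 2 := by rw [ht2]; ring
  calc -((∑ i, Real.log (x i + α * d i)) - (∑ i, Real.log (x i)) - α * ∑ i, d i / x i)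
      = ∑ i, (α * (d i / x i) - (Real.log (x i + α * d i) - Real.log (x i))) := by
        rw [Finset.sum_sub_distrib, Finset.sum_sub_distrib, ← Finset.mul_sum]; ring
    _ ≤ ∑ i, α ^ 2 * (1 / (1 - τ)) * (d i / x i) ^ 2 := Finset.sum_le_sum (fun i _ => hmain i)
    _ = α ^ 2 * (1 / (1 - τ)) * ∑ i, (d i / x i) ^ 2 := by rw [← Finset.mul_sum]
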